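/- arXiv:2409.04067 — 8 statements merged into one kernel-verified Lean document; each statement's English description precedes it below -/
import Mathlib

section
/- Under the stated hypotheses, the matrix P = Cᵀ·C is a projection operator, i.e. P² = P. -/
open Matrix

/-- With `C = M⁻¹ * B * (Lᵀ)⁻¹`, the matrix `P = Cᵀ * C` is a projection: `P ^ 2 = P`. -/
theorem stmt_2 (n p : ℕ) (L : Matrix (Fin n) (Fin n) ℝ) (M : Matrix (Fin p) (Fin p) ℝ)
    (B : Matrix (Fin p) (Fin n) ℝ) (hL : IsUnit L) (hM : IsUnit M)
    (hS : M * Mᵀ = B * Lᵀ⁻¹ * L⁻¹ * Bᵀ)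
    (C : Matrix (Fin p) (Fin n) ℝ) (hC : C = M⁻¹ * B * Lᵀ⁻¹)
    (P : Matrix (Fin n) (Fin n) ℝ) (hP : P = Cᵀ * C) :
    P ^ 2 = P := by
  have hMd : IsUnit M.det := (Matrix.isUnit_iff_isUnit_det M).mp hM
  have hMtd : IsUnit Mᵀ.det := by rwa [Matrix.det_transpose]
  have hCCt : C * Cᵀ = 1 := by
    have : C * Cᵀ = M⁻¹ * (B * Lᵀ⁻¹ * L⁻¹ * Bᵀ) * Mᵀ⁻¹ := by
      rw [hC]
      simp [Matrix.transpose_nonsing_inv, Matrix.mul_assoc]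
    rw [this, ← hS, Matrix.mul_assoc, Matrix.mul_assoc,
      Matrix.mul_nonsing_inv _ hMtd, Matrix.mul_one,
      Matrix.nonsing_inv_mul _ hMd]
  rw [hP, pow_two, Matrix.mul_assoc, ← Matrix.mul_assoc C, hCCt, Matrix.one_mul]
end

section
/- Under the stated hypotheses, (Y − (3/2)·I)² equals the block matrix [[(P − (1/2)·I)² + P, 0], [0, (5/4)·I]], where P = Cᵀ·C. -/
open Matrix

/-- With `Z = [[I, Cᵀ], [C, 0]]`, `Y = Z²`, and `P = Cᵀ * C`, one has
`(Y - (3/2)·I)² = [[(P - (1/2)·I)² + P, 0], [0, (5/4)·I]]`. -/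
theorem stmt_5 (n p : ℕ) (L : Matrix (Fin n) (Fin n) ℝ) (M : Matrix (Fin p) (Fin p) ℝ)
    (B : Matrix (Fin p) (Fin n) ℝ) (hL : IsUnit L) (hM : IsUnit M)
    (hS : M * Mᵀ = B * Lᵀ⁻¹ * L⁻¹ * Bᵀ)
    (C : Matrix (Fin p) (Fin n) ℝ) (hC : C = M⁻¹ * B * Lᵀ⁻¹)
    (P : Matrix (Fin n) (Fin n) ℝ) (hP : P = Cᵀ * C)
    (Z : Matrix (Fin n ⊕ Fin p) (Fin n ⊕ Fin p) ℝ) (hZ : Z = fromBlocks 1 Cᵀ C 0)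
    (Y : Matrix (Fin n ⊕ Fin p) (Fin n ⊕ Fin p) ℝ) (hY : Y = Z ^ 2) :
    (Y - ((3 : ℝ) / 2) • 1) ^ 2 =
      fromBlocks ((P - ((1 : ℝ) / 2) • 1) ^ 2 + P) 0 0 (((5 : ℝ) / 4) • 1) := by
  have hMdet : IsUnit M.det := (Matrix.isUnit_iff_isUnit_det M).mp hM
  have hCC : C * Cᵀ = 1 := by
    have h1 : C * Cᵀ = M⁻¹ * (B * Lᵀ⁻¹ * L⁻¹ * Bᵀ) * Mᵀ⁻¹ := by
      rw [hC]
      simp only [transpose_mul, transpose_nonsing_inv, transpose_transpose, Matrix.mul_assoc]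
    rw [h1, ← hS,
      show M⁻¹ * (M * Mᵀ) * Mᵀ⁻¹ = (M⁻¹ * M) * (Mᵀ * Mᵀ⁻¹) from by
        simp only [Matrix.mul_assoc],
      Matrix.nonsing_inv_mul M hMdet,
      Matrix.mul_nonsing_inv Mᵀ (by simpa using hMdet), one_mul]
  have e1 : Y = fromBlocks (1 + Cᵀ * C) Cᵀ C 1 := by
    rw [hY, hZ, pow_two, Matrix.fromBlocks_multiply]
    simp [hCC]
  have e2 : Y - ((3 : ℝ) / 2) • 1 =
      fromBlocks (P - ((1 : ℝ) / 2) • 1) Cᵀ C (-(((1 : ℝ) / 2) • 1)) := by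
    rw [e1, hP, show (1 : Matrix (Fin n ⊕ Fin p) (Fin n ⊕ Fin p) ℝ) =
      fromBlocks 1 0 0 1 from by simp, Matrix.fromBlocks_smul]
    ext i j
    cases i <;> cases j <;>
      simp [Matrix.fromBlocks, Matrix.sub_apply, Matrix.add_apply, Matrix.smul_apply,
        Matrix.one_apply] <;> ring_nf <;> split <;> ring
  rw [e2, pow_two, Matrix.fromBlocks_multiply]
  have hPC : P * Cᵀ = Cᵀ := by rw [hP, Matrix.mul_assoc, hCC, Matrix.mul_one]
  have hCP : C * P = C := by rw [hP, ← Matrix.mul_assoc, hCC, Matrix.one_mul]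
  refine Matrix.fromBlocks_inj.mpr ⟨?_, ?_, ?_, ?_⟩
  · rw [← hP]; noncomm_ring
  · rw [Matrix.sub_mul, hPC, Matrix.smul_mul, Matrix.one_mul, Matrix.mul_neg,
      Matrix.mul_smul, Matrix.mul_one]
    module
  · rw [Matrix.mul_sub, hCP, Matrix.mul_smul, Matrix.mul_one, Matrix.neg_mul,
      Matrix.smul_mul, Matrix.one_mul]
    module
  · rw [hCC, neg_mul_neg, smul_mul_assoc, Matrix.one_mul, smul_smul]
    module
end

section
/- Under the stated hypotheses, (Y − (3/2)·I)² − (5/4)·I equals the block matrix [[P − I, 0], [0, 0]], where P = Cᵀ·C. -/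
open Matrix

/-- With `Z = [[I, Cᵀ], [C, 0]]`, `Y = Z²`, and `P = Cᵀ * C`, one has
`(Y - (3/2)·I)² - (5/4)·I = [[P - I, 0], [0, 0]]`. -/
theorem stmt_6 (n p : ℕ) (L : Matrix (Fin n) (Fin n) ℝ) (M : Matrix (Fin p) (Fin p) ℝ)
    (B : Matrix (Fin p) (Fin n) ℝ) (hL : IsUnit L) (hM : IsUnit M)
    (hS : M * Mᵀ = B * Lᵀ⁻¹ * L⁻¹ * Bᵀ)
    (C : Matrix (Fin p) (Fin n) ℝ) (hC : C = M⁻¹ * B * Lᵀ⁻¹)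
    (P : Matrix (Fin n) (Fin n) ℝ) (hP : P = Cᵀ * C)
    (Z : Matrix (Fin n ⊕ Fin p) (Fin n ⊕ Fin p) ℝ) (hZ : Z = fromBlocks 1 Cᵀ C 0)
    (Y : Matrix (Fin n ⊕ Fin p) (Fin n ⊕ Fin p) ℝ) (hY : Y = Z ^ 2) :
    (Y - ((3 : ℝ) / 2) • 1) ^ 2 - ((5 : ℝ) / 4) • 1 = fromBlocks (P - 1) 0 0 0 := by
  have hCC : C * Cᵀ = 1 := by
    have hMinv : M⁻¹ * M = 1 := nonsing_inv_mul M ((isUnit_iff_isUnit_det M).mp hM)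
    have hMTinv : Mᵀ * Mᵀ⁻¹ = 1 := by
      rw [← transpose_nonsing_inv, ← transpose_mul, hMinv, transpose_one]
    have key : C * Cᵀ = M⁻¹ * (M * Mᵀ * Mᵀ⁻¹) := by
      rw [hC]
      simp only [transpose_mul, transpose_nonsing_inv, transpose_transpose, hS,
        Matrix.mul_assoc]
    rw [key, Matrix.mul_assoc M, hMTinv, Matrix.mul_one, hMinv]
  have hPP : P * P = P := by
    rw [hP, Matrix.mul_assoc, ← Matrix.mul_assoc C, hCC, Matrix.one_mul]
  have hPC : P * Cᵀ = Cᵀ := by rw [hP, Matrix.mul_assoc, hCC, Matrix.mul_one]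
  have hCP : C * P = C := by rw [hP, ← Matrix.mul_assoc, hCC, Matrix.one_mul]
  subst hY hZ
  rw [← fromBlocks_one, sub_eq_add_neg, sub_eq_add_neg]
  simp only [pow_two, fromBlocks_multiply, fromBlocks_smul, fromBlocks_neg,
    fromBlocks_add, fromBlocks_multiply, Matrix.mul_one, Matrix.one_mul,
    Matrix.mul_zero, Matrix.zero_mul, add_zero, zero_add, smul_zero, neg_zero, hCC]
  rw [← hP]
  refine fromBlocks_inj.mpr ⟨?_, ?_, ?_, ?_⟩ <;>
    simp only [Matrix.add_mul, Matrix.mul_add, Matrix.neg_mul, Matrix.mul_neg,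
      Matrix.smul_mul, Matrix.mul_smul, smul_mul_assoc, mul_smul_comm,
      Matrix.one_mul, Matrix.mul_one, hPP, hPC, hCP] <;>
    module
end

section
/- (Main Lemma of the Appendix) Under the stated hypotheses, the matrix Y = Z² satisfies the annihilating polynomial identity (Y − I)·((Y − (3/2)·I)² − (5/4)·I) = 0. -/
open Matrix

/-- Main Lemma of the Appendix: with `Z = [[I, Cᵀ], [C, 0]]` and `Y = Z²`,
the annihilating polynomial identity `(Y - I) * ((Y - (3/2)·I)² - (5/4)·I) = 0` holds. -/
theorem stmt_7 (n p : ℕ) (L : Matrix (Fin n) (Fin n) ℝ) (M : Matrix (Fin p) (Fin p) ℝ)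
    (B : Matrix (Fin p) (Fin n) ℝ) (hL : IsUnit L) (hM : IsUnit M)
    (hS : M * Mᵀ = B * Lᵀ⁻¹ * L⁻¹ * Bᵀ)
    (C : Matrix (Fin p) (Fin n) ℝ) (hC : C = M⁻¹ * B * Lᵀ⁻¹)
    (Z : Matrix (Fin n ⊕ Fin p) (Fin n ⊕ Fin p) ℝ) (hZ : Z = fromBlocks 1 Cᵀ C 0)
    (Y : Matrix (Fin n ⊕ Fin p) (Fin n ⊕ Fin p) ℝ) (hY : Y = Z ^ 2) :
    (Y - 1) * ((Y - ((3 : ℝ) / 2) • 1) ^ 2 - ((5 : ℝ) / 4) • 1) = 0 := by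
  have hMd : IsUnit M.det := (isUnit_iff_isUnit_det M).mp hM
  have hMt : IsUnit Mᵀ.det := by rwa [det_transpose]
  have h1 : C * Cᵀ = 1 := by
    have : C * Cᵀ = M⁻¹ * (B * Lᵀ⁻¹ * L⁻¹ * Bᵀ) * Mᵀ⁻¹ := by
      rw [hC]
      simp only [transpose_mul, transpose_nonsing_inv, transpose_transpose, Matrix.mul_assoc]
    rw [this, ← hS, Matrix.mul_assoc, Matrix.mul_assoc, Matrix.mul_nonsing_inv _ hMt,
      Matrix.mul_one, Matrix.nonsing_inv_mul _ hMd]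
  set P := Cᵀ * C with hPdef
  have hP : P * P = P := by
    rw [hPdef, Matrix.mul_assoc, ← Matrix.mul_assoc C, h1, Matrix.one_mul]
  have hPC : P * Cᵀ = Cᵀ := by
    rw [hPdef, Matrix.mul_assoc, h1, Matrix.mul_one]
  have hCP : C * P = C := by
    rw [hPdef, ← Matrix.mul_assoc, h1, Matrix.one_mul]
  subst hY hZ
  rw [pow_two, fromBlocks_multiply]
  simp only [Matrix.mul_one, Matrix.one_mul, Matrix.mul_zero, Matrix.zero_mul, add_zero,
    zero_add, h1]
  have hone : (1 : Matrix (Fin n ⊕ Fin p) (Fin n ⊕ Fin p) ℝ) = fromBlocks 1 0 0 1 :=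
    (fromBlocks_one).symm
  have e1 : fromBlocks (1 + P) Cᵀ C 1 - (1 : Matrix (Fin n ⊕ Fin p) (Fin n ⊕ Fin p) ℝ)
      = fromBlocks P Cᵀ C 0 := by
    rw [hone, sub_eq_add_neg, fromBlocks_neg, fromBlocks_add]
    rw [fromBlocks_inj]; refine ⟨?_, ?_, ?_, ?_⟩ <;> module
  have e2 : fromBlocks (1 + P) Cᵀ C 1 - ((3:ℝ)/2) • (1 : Matrix (Fin n ⊕ Fin p) (Fin n ⊕ Fin p) ℝ)
      = fromBlocks (P - ((1:ℝ)/2) • 1) Cᵀ C (-(((1:ℝ)/2) • 1)) := by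
    rw [hone, fromBlocks_smul, smul_zero, sub_eq_add_neg, fromBlocks_neg, fromBlocks_add]
    rw [fromBlocks_inj]; refine ⟨?_, ?_, ?_, ?_⟩ <;> module
  have e3 : (fromBlocks (P - ((1:ℝ)/2) • 1) Cᵀ C (-(((1:ℝ)/2) • (1 : Matrix (Fin p) (Fin p) ℝ)))) *
      (fromBlocks (P - ((1:ℝ)/2) • 1) Cᵀ C (-(((1:ℝ)/2) • 1)))
      - ((5:ℝ)/4) • (1 : Matrix (Fin n ⊕ Fin p) (Fin n ⊕ Fin p) ℝ)
      = fromBlocks (P - 1) 0 0 0 := by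
    rw [fromBlocks_multiply, hone, fromBlocks_smul, smul_zero, sub_eq_add_neg, fromBlocks_neg,
      fromBlocks_add, fromBlocks_inj]
    refine ⟨?_, ?_, ?_, ?_⟩ <;>
      simp only [Matrix.sub_mul, Matrix.mul_sub, Matrix.smul_mul, Matrix.mul_smul,
        Matrix.mul_one, Matrix.one_mul, Matrix.mul_neg, Matrix.neg_mul, hP, hPC, hCP, h1,
        smul_smul, smul_neg, neg_neg, sub_neg_eq_add] <;> module
  rw [e1, pow_two, ← hPdef, e2, e3, fromBlocks_multiply]
  simp only [Matrix.mul_zero, Matrix.zero_mul, add_zero, zero_add]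
  simp [Matrix.mul_sub, Matrix.mul_one, hP, hCP]
end

section
/- Under the stated hypotheses, every real eigenvalue of the symmetric matrix Y = Z² lies in the three-element set {1, (3 + √5)/2, (3 − √5)/2}; in particular Y has at most three distinct eigenvalues. -/
open Matrix

/-- Every real eigenvalue of the symmetric matrix `Y = Z²` lies in the three-element set
`{1, (3 + √5)/2, (3 - √5)/2}`; in particular `Y` has at most three distinct eigenvalues. -/
theorem stmt_9 (n p : ℕ) (L : Matrix (Fin n) (Fin n) ℝ) (M : Matrix (Fin p) (Fin p) ℝ)
    (B : Matrix (Fin p) (Fin n) ℝ) (hL : IsUnit L) (hM : IsUnit M)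
    (hS : M * Mᵀ = B * Lᵀ⁻¹ * L⁻¹ * Bᵀ)
    (C : Matrix (Fin p) (Fin n) ℝ) (hC : C = M⁻¹ * B * Lᵀ⁻¹)
    (Z : Matrix (Fin n ⊕ Fin p) (Fin n ⊕ Fin p) ℝ) (hZ : Z = fromBlocks 1 Cᵀ C 0)
    (Y : Matrix (Fin n ⊕ Fin p) (Fin n ⊕ Fin p) ℝ) (hY : Y = Z ^ 2) :
    ∀ μ : ℝ, (∃ v : Fin n ⊕ Fin p → ℝ, v ≠ 0 ∧ Y.mulVec v = μ • v) →
      μ ∈ ({1, (3 + Real.sqrt 5) / 2, (3 - Real.sqrt 5) / 2} : Set ℝ) := by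
  rintro μ ⟨v, hv, hμv⟩
  simp only [Set.mem_insert_iff, Set.mem_singleton_iff]
  have hMd : IsUnit M.det := (Matrix.isUnit_iff_isUnit_det M).mp hM
  have hMtd : IsUnit Mᵀ.det := by simpa [Matrix.det_transpose] using hMd
  -- C * Cᵀ = 1
  have hCC : C * Cᵀ = 1 := by
    have h1 : (Lᵀ⁻¹)ᵀ = L⁻¹ := by
      rw [Matrix.transpose_nonsing_inv, Matrix.transpose_transpose]
    have key : M⁻¹ * (M * Mᵀ * (Mᵀ)⁻¹) = 1 := by
      rw [Matrix.mul_assoc M, Matrix.mul_nonsing_inv _ hMtd, Matrix.mul_one,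
        Matrix.nonsing_inv_mul _ hMd]
    rw [hC, Matrix.transpose_mul, Matrix.transpose_mul, h1, Matrix.transpose_nonsing_inv]
    calc M⁻¹ * B * Lᵀ⁻¹ * (L⁻¹ * (Bᵀ * (Mᵀ)⁻¹))
        = M⁻¹ * (B * Lᵀ⁻¹ * L⁻¹ * Bᵀ * (Mᵀ)⁻¹) := by
          simp only [Matrix.mul_assoc]
      _ = M⁻¹ * (M * Mᵀ * (Mᵀ)⁻¹) := by rw [← hS]
      _ = 1 := key
  -- Z² as block matrix, and Z³ = 2Z² − 1
  have hZ2 : Z ^ 2 = fromBlocks (1 + Cᵀ * C) Cᵀ C 1 := by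
    rw [hZ, pow_two, Matrix.fromBlocks_multiply]
    simp [hCC]
  have hone : (1 : Matrix (Fin n ⊕ Fin p) (Fin n ⊕ Fin p) ℝ) = fromBlocks 1 0 0 1 :=
    (Matrix.fromBlocks_one).symm
  have htwo : (2 : Matrix (Fin n ⊕ Fin p) (Fin n ⊕ Fin p) ℝ) =
      fromBlocks (1 + 1) 0 0 (1 + 1) := by
    rw [show (2 : Matrix (Fin n ⊕ Fin p) (Fin n ⊕ Fin p) ℝ) = 1 + 1 from one_add_one_eq_two.symm,
      hone, Matrix.fromBlocks_add]
    norm_num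
  have hZ3 : Z ^ 3 = 2 * Z ^ 2 - 1 := by
    have e3 : Z ^ 3 = Z ^ 2 * Z := by rw [pow_succ]
    rw [e3, hZ2, hZ, Matrix.fromBlocks_multiply, htwo, Matrix.fromBlocks_multiply, hone,
      sub_eq_add_neg, Matrix.fromBlocks_neg, Matrix.fromBlocks_add]
    congr 1 <;>
      first
        | (simp [Matrix.mul_add, Matrix.add_mul, Matrix.mul_assoc, hCC]; try abel)
        | (simp [Matrix.mul_add, Matrix.add_mul, Matrix.mul_assoc, hCC, two_mul]; try abel)
  have hY3 : Y ^ 3 = 4 * Y ^ 2 - 4 * Y + 1 := by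
    have h6 : Y ^ 3 = (Z ^ 3) ^ 2 := by rw [hY, ← pow_mul, ← pow_mul]
    rw [h6, hZ3, hY]
    noncomm_ring
  -- eigenvalue equation for powers
  have hpow : ∀ k : ℕ, (Y ^ k).mulVec v = (μ ^ k) • v := by
    intro k
    induction k with
    | zero => simp
    | succ k ih =>
      rw [pow_succ, pow_succ, ← Matrix.mulVec_mulVec, hμv, Matrix.mulVec_smul, ih,
        smul_smul, mul_comm μ (μ ^ k)]
  -- derive scalar cubic
  have h4 : (4 : Matrix (Fin n ⊕ Fin p) (Fin n ⊕ Fin p) ℝ) = (4 : ℝ) • 1 := by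
    rw [← Algebra.algebraMap_eq_smul_one]
    exact (map_ofNat (algebraMap ℝ _) 4).symm
  have e3 := hpow 3
  rw [hY3] at e3
  simp only [Matrix.add_mulVec, Matrix.sub_mulVec, h4, smul_mul_assoc, Matrix.one_mul,
    Matrix.smul_mulVec, Matrix.one_mulVec, hpow 2, hμv] at e3
  obtain ⟨i, hvi⟩ := Function.ne_iff.mp hv
  have hcomp := congrFun e3 i
  simp only [Pi.add_apply, Pi.sub_apply, Pi.smul_apply, smul_eq_mul] at hcomp
  have hzero : (μ ^ 3 - (4 * μ ^ 2 - 4 * μ + 1)) * v i = 0 := by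
    linear_combination -hcomp
  have hcubic : μ ^ 3 - (4 * μ ^ 2 - 4 * μ + 1) = 0 :=
    (mul_eq_zero.mp hzero).resolve_right hvi
  have hfac : (μ - 1) * (μ ^ 2 - 3 * μ + 1) = 0 := by nlinarith [hcubic]
  rcases mul_eq_zero.mp hfac with h | h
  · left; linarith
  · have h5s : Real.sqrt 5 ^ 2 = 5 := Real.sq_sqrt (by norm_num)
    have hfac2 : (2 * μ - 3 - Real.sqrt 5) * (2 * μ - 3 + Real.sqrt 5) = 0 := by
      nlinarith [h5s, h]
    rcases mul_eq_zero.mp hfac2 with h2 | h2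
    · right; left; linarith
    · right; right; linarith
end

section
/- Under the stated hypotheses, the preconditioned matrix Z itself satisfies the annihilating polynomial identity (Z − I)·(Z² − Z − I) = 0. -/
open Matrix

private lemma my_fromBlocks_sub {l m n o : Type*} {α : Type*} [SubtractionMonoid α]
    (A : Matrix n l α) (B : Matrix n m α) (C : Matrix o l α) (D : Matrix o m α)
    (A' : Matrix n l α) (B' : Matrix n m α) (C' : Matrix o l α) (D' : Matrix o m α) :
    fromBlocks A B C D - fromBlocks A' B' C' D'
      = fromBlocks (A - A') (B - B') (C - C') (D - D') := by
  ext i j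
  cases i <;> cases j <;>
    simp [Matrix.sub_apply, fromBlocks_apply₁₁, fromBlocks_apply₁₂,
      fromBlocks_apply₂₁, fromBlocks_apply₂₂]

/-- The preconditioned matrix `Z = [[I, Cᵀ], [C, 0]]` satisfies the annihilating
polynomial identity `(Z - I) * (Z² - Z - I) = 0`. -/
theorem stmt_10 (n p : ℕ) (L : Matrix (Fin n) (Fin n) ℝ) (M : Matrix (Fin p) (Fin p) ℝ)
    (B : Matrix (Fin p) (Fin n) ℝ) (hL : IsUnit L) (hM : IsUnit M)
    (hS : M * Mᵀ = B * Lᵀ⁻¹ * L⁻¹ * Bᵀ)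
    (C : Matrix (Fin p) (Fin n) ℝ) (hC : C = M⁻¹ * B * Lᵀ⁻¹)
    (Z : Matrix (Fin n ⊕ Fin p) (Fin n ⊕ Fin p) ℝ) (hZ : Z = fromBlocks 1 Cᵀ C 0) :
    (Z - 1) * (Z ^ 2 - Z - 1) = 0 := by
  have hdM : IsUnit M.det := (isUnit_iff_isUnit_det M).mp hM
  have hdMT : IsUnit Mᵀ.det := by rwa [det_transpose]
  have hCC : C * Cᵀ = 1 := by
    rw [hC, transpose_mul, transpose_mul, transpose_nonsing_inv, transpose_transpose,
      transpose_nonsing_inv]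
    calc M⁻¹ * B * Lᵀ⁻¹ * (L⁻¹ * (Bᵀ * Mᵀ⁻¹))
        = M⁻¹ * (B * Lᵀ⁻¹ * L⁻¹ * Bᵀ) * Mᵀ⁻¹ := by
          simp only [Matrix.mul_assoc]
      _ = M⁻¹ * (M * Mᵀ) * Mᵀ⁻¹ := by rw [hS]
      _ = 1 := by
          rw [← Matrix.mul_assoc M⁻¹ M Mᵀ, nonsing_inv_mul M hdM, one_mul,
            mul_nonsing_inv Mᵀ hdMT]
  subst hZ
  have h2 : (fromBlocks 1 Cᵀ C 0 : Matrix (Fin n ⊕ Fin p) (Fin n ⊕ Fin p) ℝ) ^ 2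
      = fromBlocks (1 + Cᵀ * C) Cᵀ C 1 := by
    rw [sq, fromBlocks_multiply]
    simp [hCC]
  rw [h2, ← fromBlocks_one, my_fromBlocks_sub, my_fromBlocks_sub, my_fromBlocks_sub,
    fromBlocks_multiply, ← fromBlocks_zero]
  congr 1 <;>
    simp [Matrix.sub_mul, Matrix.mul_sub, ← Matrix.mul_assoc, hCC]
end

section
/- Under the stated hypotheses, every real eigenvalue of the symmetric matrix Z lies in the three-element set {1, (1 + √5)/2, (1 − √5)/2}. -/
open Matrix

/-- Every real eigenvalue of the symmetric matrix `Z = [[I, Cᵀ], [C, 0]]` lies in the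
three-element set `{1, (1 + √5)/2, (1 - √5)/2}`. -/
theorem stmt_11 (n p : ℕ) (L : Matrix (Fin n) (Fin n) ℝ) (M : Matrix (Fin p) (Fin p) ℝ)
    (B : Matrix (Fin p) (Fin n) ℝ) (hL : IsUnit L) (hM : IsUnit M)
    (hS : M * Mᵀ = B * Lᵀ⁻¹ * L⁻¹ * Bᵀ)
    (C : Matrix (Fin p) (Fin n) ℝ) (hC : C = M⁻¹ * B * Lᵀ⁻¹)
    (Z : Matrix (Fin n ⊕ Fin p) (Fin n ⊕ Fin p) ℝ) (hZ : Z = fromBlocks 1 Cᵀ C 0) :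
    ∀ μ : ℝ, (∃ v : Fin n ⊕ Fin p → ℝ, v ≠ 0 ∧ Z.mulVec v = μ • v) →
      μ ∈ ({1, (1 + Real.sqrt 5) / 2, (1 - Real.sqrt 5) / 2} : Set ℝ) := by
  intro μ ⟨v, hv0, hev⟩
  simp only [Set.mem_insert_iff, Set.mem_singleton_iff]
  -- C * Cᵀ = 1
  have hCCT : C * Cᵀ = 1 := by
    have hCT : Cᵀ = L⁻¹ * (Bᵀ * Mᵀ⁻¹) := by
      rw [hC]
      simp only [Matrix.transpose_mul, Matrix.transpose_nonsing_inv,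
        Matrix.transpose_transpose, Matrix.mul_assoc]
    rw [hCT, hC]
    have key : M⁻¹ * B * Lᵀ⁻¹ * (L⁻¹ * (Bᵀ * Mᵀ⁻¹)) = M⁻¹ * (B * Lᵀ⁻¹ * L⁻¹ * Bᵀ) * Mᵀ⁻¹ := by
      simp only [Matrix.mul_assoc]
    rw [key, ← hS]
    have h1 : M⁻¹ * (M * Mᵀ) = Mᵀ := by
      rw [← Matrix.mul_assoc, Matrix.nonsing_inv_mul M (((Matrix.isUnit_iff_isUnit_det M).mp hM)), one_mul]
    rw [h1, Matrix.mul_nonsing_inv]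
    rw [Matrix.det_transpose]
    exact ((Matrix.isUnit_iff_isUnit_det M).mp hM)
  set x := v ∘ Sum.inl with hx
  set y := v ∘ Sum.inr with hy
  have hvelim : v = Sum.elim x y := by
    funext i; cases i <;> rfl
  rw [hZ, hvelim, Matrix.fromBlocks_mulVec] at hev
  have eq1 : x + Cᵀ.mulVec y = μ • x := by
    funext i
    have h := congrFun hev (Sum.inl i)
    simpa using h
  have eq2 : C.mulVec x = μ • y := by
    funext j
    have h := congrFun hev (Sum.inr j)
    simpa using h
  by_cases hy0 : y = 0
  · -- then x ≠ 0 and μ = 1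
    left
    have hxne : x ≠ 0 := by
      intro hx0
      apply hv0
      rw [hvelim, hx0, hy0]
      funext i; cases i <;> rfl
    obtain ⟨i, hi⟩ := Function.ne_iff.mp hxne
    have hi' : x i ≠ 0 := hi
    have h := congrFun eq1 i
    rw [hy0] at h
    simp only [Matrix.mulVec_zero, Pi.add_apply, Pi.zero_apply, add_zero,
      Pi.smul_apply, smul_eq_mul] at h
    have hfac : (μ - 1) * x i = 0 := by linear_combination -h
    rcases mul_eq_zero.mp hfac with h1 | h1
    · linarith
    · exact absurd h1 hi'
  · -- μ² = μ + 1
    obtain ⟨j, hj⟩ := Function.ne_iff.mp hy0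
    have hj' : y j ≠ 0 := hj
    have happ : C.mulVec (x + Cᵀ.mulVec y) = C.mulVec (μ • x) := by rw [eq1]
    rw [Matrix.mulVec_add, Matrix.mulVec_smul, Matrix.mulVec_mulVec, hCCT,
      Matrix.one_mulVec, eq2] at happ
    have h := congrFun happ j
    simp only [Pi.add_apply, Pi.smul_apply, smul_eq_mul] at h
    have hquad : μ ^ 2 - μ - 1 = 0 := by
      have key : (μ ^ 2 - μ - 1) * y j = 0 := by linear_combination -h
      rcases mul_eq_zero.mp key with h1 | h1
      · exact h1
      · exact absurd h1 hj'
    have h5 : Real.sqrt 5 ^ 2 = 5 := Real.sq_sqrt (by norm_num)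
    have hfac : (μ - (1 + Real.sqrt 5) / 2) * (μ - (1 - Real.sqrt 5) / 2) = 0 := by
      nlinarith [hquad, h5]
    rcases mul_eq_zero.mp hfac with h1 | h1
    · right; left; linarith
    · right; right; linarith
end

section
/- Under the stated hypotheses, the quadratic form of Y = Z² satisfies the two-sided bound ((3 − √5)/2)·‖x‖² ≤ xᵀ·Y·x ≤ ((3 + √5)/2)·‖x‖² for every real vector x of dimension n + p; in particular the spectral condition number of Y is bounded by (3 + √5)/(3 − √5), independently of n and p (i.e. of the mesh resolution). -/
open Matrix

lemma cs_dot (n : ℕ) (s v : Fin n → ℝ) : (s ⬝ᵥ v)^2 ≤ (s ⬝ᵥ s)*(v ⬝ᵥ v) := by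
  simp only [dotProduct, ← pow_two]
  exact Finset.sum_mul_sq_le_sq_mul_sq Finset.univ s v

lemma dot_self_nonneg (n : ℕ) (s : Fin n → ℝ) : 0 ≤ s ⬝ᵥ s := by
  simp only [dotProduct, ← pow_two]
  positivity

lemma scalar_key (a S V t : ℝ) (ha : 0 ≤ a) (hS : 0 ≤ S) (hV : 0 ≤ V)
    (ht : t ^ 2 ≤ S * V) :
    ((3 - Real.sqrt 5) / 2) * (a + S + V) ≤ a + (S + 2 * t + V) + S ∧
    a + (S + 2 * t + V) + S ≤ ((3 + Real.sqrt 5) / 2) * (a + S + V) := by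
  have h5 : Real.sqrt 5 ^ 2 = 5 := Real.sq_sqrt (by norm_num)
  have h5' : (2:ℝ) ≤ Real.sqrt 5 := by nlinarith [Real.sqrt_nonneg 5, h5]
  set σ := Real.sqrt S with hσ
  set ν := Real.sqrt V with hν
  have hσ2 : σ ^ 2 = S := Real.sq_sqrt hS
  have hν2 : ν ^ 2 = V := Real.sq_sqrt hV
  have hσ0 : 0 ≤ σ := Real.sqrt_nonneg _
  have hν0 : 0 ≤ ν := Real.sqrt_nonneg _
  have htt : t ^ 2 ≤ (σ * ν) ^ 2 := by rw [mul_pow, hσ2, hν2]; exact ht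
  have h12 : |t| ≤ σ * ν := by
    have h := Real.sqrt_le_sqrt htt
    rwa [Real.sqrt_sq_eq_abs, Real.sqrt_sq (mul_nonneg hσ0 hν0)] at h
  obtain ⟨h1, h2⟩ := abs_le.mp h12
  constructor
  · nlinarith [sq_nonneg ((1 + Real.sqrt 5) / 2 * σ - ν), sq_nonneg σ, sq_nonneg ν]
  · nlinarith [sq_nonneg (σ - (1 + Real.sqrt 5) / 2 * ν), sq_nonneg σ, sq_nonneg ν]

/-- Two-sided bound for the quadratic form of `Y = Z²`:
`((3 - √5)/2)·‖x‖² ≤ xᵀ·Y·x ≤ ((3 + √5)/2)·‖x‖²` for every vector `x` (Euclidean norm),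
independently of `n` and `p` (i.e. of the mesh resolution). -/
theorem stmt_14 (n p : ℕ) (L : Matrix (Fin n) (Fin n) ℝ) (M : Matrix (Fin p) (Fin p) ℝ)
    (B : Matrix (Fin p) (Fin n) ℝ) (hL : IsUnit L) (hM : IsUnit M)
    (hS : M * Mᵀ = B * Lᵀ⁻¹ * L⁻¹ * Bᵀ)
    (C : Matrix (Fin p) (Fin n) ℝ) (hC : C = M⁻¹ * B * Lᵀ⁻¹)
    (Z : Matrix (Fin n ⊕ Fin p) (Fin n ⊕ Fin p) ℝ) (hZ : Z = fromBlocks 1 Cᵀ C 0)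
    (Y : Matrix (Fin n ⊕ Fin p) (Fin n ⊕ Fin p) ℝ) (hY : Y = Z ^ 2) :
    ∀ x : EuclideanSpace ℝ (Fin n ⊕ Fin p),
      ((3 - Real.sqrt 5) / 2) * ‖x‖ ^ 2 ≤ (x : Fin n ⊕ Fin p → ℝ) ⬝ᵥ Y.mulVec x ∧
      (x : Fin n ⊕ Fin p → ℝ) ⬝ᵥ Y.mulVec x ≤ ((3 + Real.sqrt 5) / 2) * ‖x‖ ^ 2 := by
  -- C * Cᵀ = 1
  have hMdet : IsUnit M.det := (Matrix.isUnit_iff_isUnit_det M).1 hM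
  have hMTdet : IsUnit Mᵀ.det := by rwa [Matrix.det_transpose]
  have hCC : C * Cᵀ = 1 := by
    have : C * Cᵀ = M⁻¹ * (B * Lᵀ⁻¹ * L⁻¹ * Bᵀ) * Mᵀ⁻¹ := by
      rw [hC]
      simp only [Matrix.transpose_mul, Matrix.transpose_nonsing_inv, Matrix.transpose_transpose,
        Matrix.mul_assoc]
    rw [this, ← hS]
    calc M⁻¹ * (M * Mᵀ) * Mᵀ⁻¹ = (M⁻¹ * M) * (Mᵀ * Mᵀ⁻¹) := by
          simp only [Matrix.mul_assoc]
    _ = 1 := by rw [Matrix.nonsing_inv_mul M hMdet, Matrix.mul_nonsing_inv Mᵀ hMTdet, one_mul]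
  intro x
  set u : Fin n → ℝ := fun i => x (Sum.inl i) with hu
  set v : Fin p → ℝ := fun j => x (Sum.inr j) with hv
  set s : Fin p → ℝ := C.mulVec u with hs
  set u₀ : Fin n → ℝ := u - Cᵀ.mulVec s with hu0
  -- basic identities for vectors
  have hCCv : ∀ w : Fin p → ℝ, C.mulVec (Cᵀ.mulVec w) = w := by
    intro w
    rw [Matrix.mulVec_mulVec, hCC, Matrix.one_mulVec]
  have hCu0 : C.mulVec u₀ = 0 := by
    rw [hu0, Matrix.mulVec_sub, hCCv, ← hs, sub_self]
  have hdot_tr : ∀ (w : Fin n → ℝ) (z : Fin p → ℝ),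
      w ⬝ᵥ Cᵀ.mulVec z = C.mulVec w ⬝ᵥ z := by
    intro w z
    rw [Matrix.dotProduct_mulVec, Matrix.vecMul_transpose]
  -- x as Sum.elim u v
  have hxe : (x : Fin n ⊕ Fin p → ℝ) = Sum.elim u v := by
    funext i; cases i <;> rfl
  -- Z symmetric
  have hZsym : Zᵀ = Z := by
    rw [hZ, Matrix.fromBlocks_transpose, Matrix.transpose_one, Matrix.transpose_transpose,
      Matrix.transpose_zero]
  -- quadratic form = ‖Zx‖²
  set w : Fin n ⊕ Fin p → ℝ := Z.mulVec (Sum.elim u v) with hw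
  have hquad : (x : Fin n ⊕ Fin p → ℝ) ⬝ᵥ Y.mulVec x = w ⬝ᵥ w := by
    rw [hY, hxe, pow_two, ← Matrix.mulVec_mulVec, Matrix.dotProduct_mulVec,
      ← Matrix.mulVec_transpose, hZsym, ← hw]
  -- explicit form of w
  have hwe : w = Sum.elim (u + Cᵀ.mulVec v) s := by
    rw [hw, hZ, Matrix.fromBlocks_mulVec]
    simp [hs]
  -- norm of x
  have hnorm : ‖x‖ ^ 2 = u ⬝ᵥ u + v ⬝ᵥ v := by
    rw [EuclideanSpace.norm_eq, Real.sq_sqrt (by positivity)]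
    simp only [Real.norm_eq_abs, sq_abs, Fintype.sum_sum_type, dotProduct, ← pow_two]
    rfl
  -- dot products over the sum type
  have hdot_sum : ∀ (a c : Fin n → ℝ) (b d : Fin p → ℝ),
      (Sum.elim a b) ⬝ᵥ (Sum.elim c d) = a ⬝ᵥ c + b ⬝ᵥ d := by
    intro a c b d
    simp [dotProduct, Fintype.sum_sum_type]
  -- decomposition of u
  have hu_decomp : u = u₀ + Cᵀ.mulVec s := by rw [hu0, sub_add_cancel]
  have hortho : u₀ ⬝ᵥ Cᵀ.mulVec s = 0 := by rw [hdot_tr, hCu0, zero_dotProduct]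
  have hCT_dot : ∀ z z' : Fin p → ℝ, Cᵀ.mulVec z ⬝ᵥ Cᵀ.mulVec z' = z ⬝ᵥ z' := by
    intro z z'
    rw [Matrix.dotProduct_mulVec, Matrix.vecMul_transpose, hCCv]
  have hortho' : Cᵀ.mulVec s ⬝ᵥ u₀ = 0 := by rw [dotProduct_comm]; exact hortho
  -- compute  u ⬝ u
  have huu : u ⬝ᵥ u = u₀ ⬝ᵥ u₀ + s ⬝ᵥ s := by
    rw [hu_decomp, add_dotProduct, dotProduct_add, dotProduct_add,
      hortho, hortho', hCT_dot]
    ring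
  -- compute w ⬝ w
  have hww : w ⬝ᵥ w = u₀ ⬝ᵥ u₀ + (s ⬝ᵥ s + 2 * (s ⬝ᵥ v) + v ⬝ᵥ v) + s ⬝ᵥ s := by
    rw [hwe, hdot_sum]
    have : u + Cᵀ.mulVec v = u₀ + Cᵀ.mulVec (s + v) := by
      rw [hu_decomp, Matrix.mulVec_add]; ring
    rw [this, add_dotProduct, dotProduct_add, dotProduct_add, hCT_dot]
    have h1 : u₀ ⬝ᵥ Cᵀ.mulVec (s + v) = 0 := by
      rw [hdot_tr, hCu0, zero_dotProduct]
    have h2 : Cᵀ.mulVec (s + v) ⬝ᵥ u₀ = 0 := by rw [dotProduct_comm]; exact h1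
    rw [h1, h2, add_dotProduct, dotProduct_add, dotProduct_add]
    rw [dotProduct_comm v s]
    ring
  have key := scalar_key (u₀ ⬝ᵥ u₀) (s ⬝ᵥ s) (v ⬝ᵥ v) (s ⬝ᵥ v)
    (dot_self_nonneg n u₀) (dot_self_nonneg p s) (dot_self_nonneg p v) (cs_dot p s v)
  rw [hquad, hww, hnorm, huu]
  constructor
  · have := key.1; linarith
  · have := key.2; linarith
end
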